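/- Let 0 ≤ b < k and m ≥ 2k−b. If H is a k-uniform hypergraph on m vertices with more than C(m,k−1) edges, then H contains two edges sharing exactly b vertices. -/

import Mathlib

open Finset

private lemma Ykb_free_card_le : ∀ (b : ℕ), ∀ {V : Type u} [Fintype V] [DecidableEq V],
    ∀ (k m : ℕ), b < k → 2 * k - b ≤ m → Fintype.card V = m →
    ∀ E : Finset (Finset V), (∀ e ∈ E, e.card = k) →
    (∀ e ∈ E, ∀ f ∈ E, e ≠ f → (e ∩ f).card ≠ b) →
    E.card ≤ m.choose (k - 1) := by
  intro b
  induction b with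
  | zero =>
    intro V _ _ k m hb hm hV E hE hfree
    -- base case: intersecting family, use Erdős–Ko–Rado
    have hk : 1 ≤ k := hb
    have hm2 : 2 * k ≤ m := by omega
    let ι := (Fintype.equivFinOfCardEq hV).toEmbedding
    let F : Finset (Finset (Fin m)) := E.image (fun e => e.map ι)
    have hcardF : F.card = E.card := by
      apply card_image_of_injective
      intro e f hef
      exact Finset.map_injective ι hef
    have hsized : (F : Set (Finset (Fin m))).Sized k := by
      intro A hA
      simp only [F, coe_image, Set.mem_image, mem_coe] at hA
      obtain ⟨e, he, rfl⟩ := hA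
      simpa using hE e he
    have hint : (F : Set (Finset (Fin m))).Intersecting := by
      intro A hA B hB
      simp only [F, coe_image, Set.mem_image, mem_coe] at hA hB
      obtain ⟨e, he, rfl⟩ := hA
      obtain ⟨f, hf, rfl⟩ := hB
      rw [Finset.not_disjoint_iff_nonempty_inter, ← Finset.map_inter, Finset.map_nonempty,
        ← Finset.card_pos]
      rcases eq_or_ne e f with rfl | hne
      · rw [Finset.inter_self, hE e he]; omega
      · have := hfree e he f hf hne
        omega
    have := Finset.erdos_ko_rado hint hsized (by omega)
    calc E.card = F.card := hcardF.symm
      _ ≤ (m - 1).choose (k - 1) := this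
      _ ≤ m.choose (k - 1) := Nat.choose_le_choose _ (by omega)
  | succ b ih =>
    intro V _ _ k m hb hm hV E hE hfree
    have hk2 : 2 ≤ k := by omega
    have hm1 : 1 ≤ m := by omega
    -- vertex links
    have key : ∀ v : V, (E.filter (fun e => v ∈ e)).card ≤ (m - 1).choose (k - 2) := by
      intro v
      let p : V → Prop := fun x => x ≠ v
      have hfp : ∀ s : Finset V, s.filter p = s.erase v := fun s => Finset.filter_ne' s v
      have hinj : ∀ e ∈ E.filter (fun e => v ∈ e), ∀ f ∈ E.filter (fun e => v ∈ e),
          e.subtype p = f.subtype p → e = f := by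
        intro e he f hf hef
        simp only [mem_filter] at he hf
        have h1 : e.filter p = f.filter p := by
          rw [← Finset.subtype_map p, ← Finset.subtype_map p, hef]
        rw [hfp e, hfp f] at h1
        rw [← Finset.insert_erase he.2, ← Finset.insert_erase hf.2, h1]
      let L : Finset (Finset {x : V // p x}) := (E.filter (fun e => v ∈ e)).image
        (fun e => e.subtype p)
      have hLcard : L.card = (E.filter (fun e => v ∈ e)).card :=
        card_image_of_injOn hinj
      have hVcard : Fintype.card {x : V // p x} = m - 1 := by
        have : Fintype.card {x : V // ¬ (x = v)} = m - 1 := by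
          rw [Fintype.card_subtype_compl, Fintype.card_subtype_eq, hV]
        exact this
      have hinter : ∀ e f : Finset V, (e.subtype p) ∩ (f.subtype p) = (e ∩ f).subtype p := by
        intro e f
        ext ⟨x, hx⟩
        simp [Finset.mem_subtype]
      have hLsized : ∀ e ∈ L, e.card = k - 1 := by
        intro e' he'
        simp only [L, mem_image, mem_filter] at he'
        obtain ⟨e, ⟨he, hv⟩, rfl⟩ := he'
        rw [Finset.card_subtype, hfp e, Finset.card_erase_of_mem hv, hE e he]
      have hLfree : ∀ e ∈ L, ∀ f ∈ L, e ≠ f → (e ∩ f).card ≠ b := by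
        intro e' he' f' hf' hne
        simp only [L, mem_image, mem_filter] at he' hf'
        obtain ⟨e, ⟨he, hve⟩, rfl⟩ := he'
        obtain ⟨f, ⟨hf, hvf⟩, rfl⟩ := hf'
        have hef : e ≠ f := fun h => hne (by rw [h])
        have hbne := hfree e he f hf hef
        rw [hinter, Finset.card_subtype, hfp (e ∩ f),
          Finset.card_erase_of_mem (Finset.mem_inter.2 ⟨hve, hvf⟩)]
        have hpos : 0 < (e ∩ f).card := card_pos.2 ⟨v, Finset.mem_inter.2 ⟨hve, hvf⟩⟩
        omega
      have hih : L.card ≤ (m - 1).choose (k - 1 - 1) := ih (k - 1) (m - 1) (by omega) (by omega)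
        hVcard L hLsized hLfree
      have h2 : k - 1 - 1 = k - 2 := by omega
      rw [h2, hLcard] at hih
      exact hih
    -- double counting
    have hsum : ∑ v : V, (E.filter (fun e => v ∈ e)).card = k * E.card := by
      simp only [Finset.card_filter]
      rw [Finset.sum_comm]
      have hrow : ∀ e ∈ E, (∑ v : V, if v ∈ e then 1 else 0) = k := by
        intro e he
        rw [Finset.sum_ite_mem, Finset.univ_inter, Finset.sum_const, smul_eq_mul, mul_one,
          hE e he]
      rw [Finset.sum_congr rfl hrow, Finset.sum_const, smul_eq_mul, mul_comm]
    have hle : k * E.card ≤ m * (m - 1).choose (k - 2) := by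
      rw [← hsum]
      calc ∑ v : V, (E.filter (fun e => v ∈ e)).card
          ≤ ∑ _v : V, (m - 1).choose (k - 2) := Finset.sum_le_sum (fun v _ => key v)
        _ = m * (m - 1).choose (k - 2) := by rw [Finset.sum_const, smul_eq_mul, card_univ, hV]
    have hid : m * (m - 1).choose (k - 2) = m.choose (k - 1) * (k - 1) := by
      have := Nat.add_one_mul_choose_eq (m - 1) (k - 2)
      have h1 : (m - 1).succ = m := by omega
      have h2 : (k - 2).succ = k - 1 := by omega
      rw [Nat.succ_eq_add_one] at h1 h2
      rw [h1, h2] at this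
      exact this
    have : k * E.card ≤ k * m.choose (k - 1) := by
      calc k * E.card ≤ m.choose (k - 1) * (k - 1) := by rw [← hid]; exact hle
        _ ≤ k * m.choose (k - 1) := by
            rw [mul_comm]
            exact Nat.mul_le_mul_right _ (by omega)
    exact Nat.le_of_mul_le_mul_left this (by omega)

/-- If a `k`-uniform hypergraph on `m ≥ 2k−b` vertices (`0 ≤ b < k`) has more than
`C(m, k−1)` edges, then it contains two edges sharing exactly `b` vertices. -/
theorem exists_Ykb_of_card_gt {V : Type*} [Fintype V] [DecidableEq V]
    (k b m : ℕ) (hb : b < k) (hm : 2 * k - b ≤ m)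
    (hV : Fintype.card V = m)
    (E : Finset (Finset V)) (hE : ∀ e ∈ E, e.card = k)
    (hcard : m.choose (k - 1) < E.card) :
    ∃ e ∈ E, ∃ f ∈ E, e ≠ f ∧ (e ∩ f).card = b := by
  by_contra h
  push_neg at h
  have hfree : ∀ e ∈ E, ∀ f ∈ E, e ≠ f → (e ∩ f).card ≠ b := by
    intro e he f hf hne
    exact h e he f hf hne
  exact absurd (Ykb_free_card_le b k m hb hm hV E hE hfree) (by omega)
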